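/- Let N ≥ 1, g > 0, γ_i > 0 with Σ_i γ_i = 1, H_i > 0 and ũ_i ∈ ℝ for i = 1,…,N. Set h_N = Σ_{i=1}^N γ_i H_i, ũ₋ = min_i ũ_i, ũ₊ = max_i ũ_i, J₋ = [ũ₋ − √(g h_N), ũ₋), J₊ = (ũ₊, ũ₊ + √(g h_N)], and D_i = { z ∈ ℂ : |z − ũ_i| ≤ √(g h_N) and ũ₋ ≤ Re z ≤ ũ₊ }. Then every complex eigenvalue of A_N lies in J₋ ∪ J₊ ∪ (⋃_{i=1}^N D_i), and there exist exactly one eigenvalue c₋ of A_N in J₋ and exactly one eigenvalue c₊ of A_N in J₊. -/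

import Mathlib

open Matrix

/-- The `2N × 2N` block matrix `A_N = [[diag ũ, diag H], [g·𝟙⊗γ, diag ũ]]` of the
multilayer semi-Lagrangian system. -/
noncomputable def multilayerMatrix (N : ℕ) (g : ℝ) (γ H u : Fin N → ℝ) :
    Matrix (Fin N ⊕ Fin N) (Fin N ⊕ Fin N) ℝ :=
  Matrix.fromBlocks (Matrix.diagonal u) (Matrix.diagonal H)
    (Matrix.of fun _ j => g * γ j) (Matrix.diagonal u)


lemma matC_eq (N : ℕ) (g : ℝ) (γ H u : Fin N → ℝ) :
    (multilayerMatrix N g γ H u).map (fun x : ℝ => (x : ℂ)) =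
      Matrix.fromBlocks (Matrix.diagonal (fun i => (u i : ℂ)))
        (Matrix.diagonal (fun i => (H i : ℂ)))
        (Matrix.of fun _ j => (g : ℂ) * (γ j : ℂ))
        (Matrix.diagonal (fun i => (u i : ℂ))) := by
  ext i j
  cases i <;> cases j <;>
    simp [multilayerMatrix, Matrix.diagonal_apply, apply_ite (fun x : ℝ => (x : ℂ))]

lemma mem_spec_iff (N : ℕ) (g : ℝ) (γ H u : Fin N → ℝ) (z : ℂ) :
    z ∈ spectrum ℂ ((multilayerMatrix N g γ H u).map (fun x : ℝ => (x : ℂ))) ↔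
    ∃ φ ψ : Fin N → ℂ, (Sum.elim φ ψ ≠ 0) ∧
      (∀ i, (z - (u i : ℝ)) * φ i = (H i : ℝ) * ψ i) ∧
      (∀ i, (z - (u i : ℝ)) * ψ i = (g : ℝ) * ∑ j, (γ j : ℝ) * φ j) := by
  rw [spectrum.mem_iff, Matrix.isUnit_iff_isUnit_det, isUnit_iff_ne_zero, not_ne_iff,
    ← Matrix.exists_mulVec_eq_zero_iff, matC_eq]
  constructor
  · rintro ⟨v, hv, hveq⟩
    refine ⟨v ∘ Sum.inl, v ∘ Sum.inr, ?_, ?_, ?_⟩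
    · rwa [Sum.elim_comp_inl_inr]
    · intro i
      have h := congrFun hveq (Sum.inl i)
      simp [Matrix.sub_mulVec, Matrix.algebraMap_eq_diagonal, Matrix.mulVec_diagonal,
        Matrix.fromBlocks_mulVec, Matrix.mulVec, dotProduct,
        Matrix.diagonal_apply, Sum.inl.injEq, ite_mul, zero_mul, sub_mul,
        Finset.sum_sub_distrib, Finset.sum_ite_eq, Pi.algebraMap_apply] at h
      simp only [Function.comp_apply]
      linear_combination h
    · intro i
      have h := congrFun hveq (Sum.inr i)
      simp [Matrix.sub_mulVec, Matrix.algebraMap_eq_diagonal, Matrix.mulVec_diagonal,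
        Matrix.fromBlocks_mulVec, Matrix.mulVec, dotProduct,
        Matrix.diagonal_apply, Sum.inr.injEq, ite_mul, zero_mul, sub_mul,
        Finset.sum_sub_distrib, Finset.sum_ite_eq, Pi.algebraMap_apply] at h
      simp only [Function.comp_apply, mul_assoc, Finset.mul_sum] at h ⊢
      linear_combination h
  · rintro ⟨φ, ψ, hne, h1, h2⟩
    refine ⟨Sum.elim φ ψ, hne, ?_⟩
    funext x
    cases x with
    | inl i =>
      simp [Matrix.sub_mulVec, Matrix.algebraMap_eq_diagonal, Matrix.mulVec_diagonal,
        Matrix.fromBlocks_mulVec, Matrix.mulVec, dotProduct,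
        Matrix.diagonal_apply, Sum.inl.injEq, ite_mul, zero_mul, sub_mul,
        Finset.sum_sub_distrib, Finset.sum_ite_eq, Pi.algebraMap_apply]
      linear_combination h1 i
    | inr i =>
      simp [Matrix.sub_mulVec, Matrix.algebraMap_eq_diagonal, Matrix.mulVec_diagonal,
        Matrix.fromBlocks_mulVec, Matrix.mulVec, dotProduct,
        Matrix.diagonal_apply, Sum.inr.injEq, ite_mul, zero_mul, sub_mul,
        Finset.sum_sub_distrib, Finset.sum_ite_eq, Pi.algebraMap_apply]
      simp only [Finset.mul_sum, mul_assoc] at h2 ⊢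
      linear_combination h2 i

noncomputable def Ffun (N : ℕ) (g : ℝ) (γ H u : Fin N → ℝ) (x : ℝ) : ℝ :=
  ∑ i, g * (γ i * H i) / (x - u i) ^ 2

noncomputable def Sfun (N : ℕ) (g : ℝ) (γ H u : Fin N → ℝ) (z : ℂ) : ℂ :=
  ∑ i, ((g * (γ i * H i) : ℝ) : ℂ) / (z - ((u i : ℝ) : ℂ)) ^ 2

lemma Sfun_ofReal (N : ℕ) (g : ℝ) (γ H u : Fin N → ℝ) (x : ℝ) :
    Sfun N g γ H u (x : ℂ) = ((Ffun N g γ H u x : ℝ) : ℂ) := by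
  unfold Sfun Ffun
  push_cast
  rfl

lemma spec_char (N : ℕ) (hN : 1 ≤ N) (g : ℝ) (hg : 0 < g) (γ H u : Fin N → ℝ)
    (z : ℂ) (hz : ∀ i, z ≠ ((u i : ℝ) : ℂ)) :
    z ∈ spectrum ℂ ((multilayerMatrix N g γ H u).map (fun x : ℝ => (x : ℂ))) ↔
      Sfun N g γ H u z = 1 := by
  have hz' : ∀ i, z - ((u i : ℝ) : ℂ) ≠ 0 := fun i => sub_ne_zero.mpr (hz i)
  have hgC : (g : ℂ) ≠ 0 := by exact_mod_cast hg.ne'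
  rw [mem_spec_iff]
  constructor
  · rintro ⟨φ, ψ, hne, h1, h2⟩
    set T : ℂ := ∑ j, ((γ j : ℝ) : ℂ) * φ j with hT
    have hψ : ∀ i, ψ i = (g : ℂ) * T / (z - ((u i : ℝ) : ℂ)) := by
      intro i
      rw [eq_div_iff (hz' i)]
      linear_combination h2 i
    have hφ : ∀ i, φ i = (g : ℂ) * ((H i : ℝ) : ℂ) * T / (z - ((u i : ℝ) : ℂ)) ^ 2 := by
      intro i
      rw [eq_div_iff (pow_ne_zero 2 (hz' i))]
      linear_combination (z - ((u i : ℝ) : ℂ)) * h1 i + ((H i : ℝ) : ℂ) * h2 i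
    have hTne : T ≠ 0 := by
      intro h0
      apply hne
      funext x
      cases x with
      | inl i => simp [hφ i, h0]
      | inr i => simp [hψ i, h0]
    have hTS : T = T * Sfun N g γ H u z := by
      nth_rewrite 1 [hT]
      rw [Sfun, Finset.mul_sum]
      refine Finset.sum_congr rfl fun j _ => ?_
      rw [hφ j]
      push_cast
      field_simp
    exact (mul_left_cancel₀ hTne (by rw [mul_one]; exact hTS)).symm
  · intro hS
    refine ⟨fun i => (g : ℂ) * ((H i : ℝ) : ℂ) / (z - ((u i : ℝ) : ℂ)) ^ 2,
      fun i => (g : ℂ) / (z - ((u i : ℝ) : ℂ)), ?_, ?_, ?_⟩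
    · intro h
      have h0 := congrFun h (Sum.inr ⟨0, hN⟩)
      simp only [Sum.elim_inr, Pi.zero_apply] at h0
      exact (div_ne_zero hgC (hz' _)) h0
    · intro i
      beta_reduce
      rw [pow_two, mul_comm (z - ((u i : ℝ) : ℂ)), ← div_div,
        div_mul_cancel₀ _ (hz' i), mul_div_assoc]
      ring
    · intro i
      beta_reduce
      have hsum : ∑ j, ((γ j : ℝ) : ℂ) * ((g : ℂ) * ((H j : ℝ) : ℂ) / (z - ((u j : ℝ) : ℂ)) ^ 2)
          = Sfun N g γ H u z := by
        refine Finset.sum_congr rfl fun j _ => ?_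
        push_cast
        ring
      rw [hsum, hS, mul_one, mul_comm, div_mul_cancel₀ _ (hz' i)]

lemma min_dist (N : ℕ) (hN : 1 ≤ N) (g : ℝ) (hg : 0 < g) (γ H u : Fin N → ℝ)
    (hγ : ∀ i, 0 < γ i) (hH : ∀ i, 0 < H i) (z : ℂ) (hz : ∀ i, z ≠ ((u i : ℝ) : ℂ))
    (hS : Sfun N g γ H u z = 1) :
    ∃ i, ‖z - ((u i : ℝ) : ℂ)‖ ≤ Real.sqrt (g * ∑ i, γ i * H i) := by
  have : NeZero N := ⟨by omega⟩
  obtain ⟨i0, -, hmin⟩ := Finset.exists_min_image Finset.univ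
    (fun i => ‖z - ((u i : ℝ) : ℂ)‖) Finset.univ_nonempty
  set m := ‖z - ((u i0 : ℝ) : ℂ)‖ with hmdef
  have hm : 0 < m := norm_pos_iff.mpr (sub_ne_zero.mpr (hz i0))
  have h1 : (1 : ℝ) ≤ g * (∑ i, γ i * H i) / m ^ 2 := by
    have habs : (1 : ℝ) = ‖Sfun N g γ H u z‖ := by rw [hS]; simp
    rw [habs]
    calc ‖Sfun N g γ H u z‖
        ≤ ∑ i, ‖((g * (γ i * H i) : ℝ) : ℂ) / (z - ((u i : ℝ) : ℂ)) ^ 2‖ :=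
          norm_sum_le _ _
      _ = ∑ i, g * (γ i * H i) / ‖z - ((u i : ℝ) : ℂ)‖ ^ 2 := by
          refine Finset.sum_congr rfl fun i _ => ?_
          rw [norm_div, norm_pow, Complex.norm_real, Real.norm_eq_abs,
            abs_of_pos (mul_pos hg (mul_pos (hγ i) (hH i)))]
      _ ≤ ∑ i, g * (γ i * H i) / m ^ 2 := by
          refine Finset.sum_le_sum fun i _ => ?_
          have h2 : m ≤ ‖z - ((u i : ℝ) : ℂ)‖ := hmin i (Finset.mem_univ i)
          have h3 : (0:ℝ) < g * (γ i * H i) := mul_pos hg (mul_pos (hγ i) (hH i))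
          gcongr
      _ = g * (∑ i, γ i * H i) / m ^ 2 := by
          rw [← Finset.sum_div, ← Finset.mul_sum]
  have h2 : m ^ 2 ≤ g * ∑ i, γ i * H i := by
    rw [le_div_iff₀ (by positivity)] at h1
    linarith
  have hgn : 0 ≤ g * ∑ i, γ i * H i := le_trans (by positivity) h2
  exact ⟨i0, (Real.le_sqrt hm.le hgn).mpr h2⟩

lemma im_zero (N : ℕ) (hN : 1 ≤ N) (g : ℝ) (hg : 0 < g) (γ H u : Fin N → ℝ)
    (hγ : ∀ i, 0 < γ i) (hH : ∀ i, 0 < H i) (um up : ℝ)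
    (hum : ∀ i, um ≤ u i) (hup : ∀ i, u i ≤ up)
    (z : ℂ) (hS : Sfun N g γ H u z = 1) (hre : z.re < um ∨ up < z.re) : z.im = 0 := by
  have : NeZero N := ⟨by omega⟩
  by_contra hb
  have hzu : ∀ i, z - ((u i : ℝ) : ℂ) ≠ 0 := by
    intro i h
    apply hb
    have : (z - ((u i : ℝ) : ℂ)).im = 0 := by rw [h]; simp
    simpa using this
  have him : (∑ i, (((g * (γ i * H i) : ℝ) : ℂ) / (z - ((u i : ℝ) : ℂ)) ^ 2)).im = 0 := by
    rw [← Sfun]; rw [hS]; simp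
  rw [Complex.im_sum] at him
  set t : Fin N → ℝ := fun i =>
    g * (γ i * H i) * (z.re - u i) / (Complex.normSq (z - ((u i : ℝ) : ℂ))) ^ 2 with ht
  have hterm : ∀ i, (((g * (γ i * H i) : ℝ) : ℂ) / (z - ((u i : ℝ) : ℂ)) ^ 2).im
      = (-(2 * z.im)) * t i := by
    intro i
    rw [div_eq_mul_inv, Complex.mul_im, Complex.ofReal_re, Complex.ofReal_im,
      Complex.inv_im, Complex.inv_re, pow_two, Complex.mul_im, Complex.mul_re,
      map_mul Complex.normSq]
    simp only [Complex.sub_re, Complex.sub_im, Complex.ofReal_re, Complex.ofReal_im, ht]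
    have hn : Complex.normSq (z - ((u i : ℝ) : ℂ)) ≠ 0 :=
      (Complex.normSq_pos.mpr (hzu i)).ne'
    field_simp
    ring
  have hsum : ∑ i, (-(2 * z.im)) * t i = 0 := by
    rw [← him]; exact Finset.sum_congr rfl fun i _ => (hterm i).symm
  rw [← Finset.mul_sum, mul_eq_zero] at hsum
  have hts : ∑ i, t i = 0 := by
    rcases hsum with h | h
    · exact absurd (by linarith [h] : z.im = 0) hb
    · exact h
  have hnpos : ∀ i, 0 < (Complex.normSq (z - ((u i : ℝ) : ℂ))) ^ 2 := fun i =>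
    pow_pos (Complex.normSq_pos.mpr (hzu i)) 2
  rcases hre with h | h
  · have : ∑ i, t i < 0 := by
      refine Finset.sum_neg (fun i _ => ?_) Finset.univ_nonempty
      have : z.re - u i < 0 := by have := hum i; linarith
      exact div_neg_of_neg_of_pos
        (by nlinarith [mul_pos hg (mul_pos (hγ i) (hH i))]) (hnpos i)
    linarith
  · have : 0 < ∑ i, t i := by
      refine Finset.sum_pos (fun i _ => ?_) Finset.univ_nonempty
      have : 0 < z.re - u i := by have := hup i; linarith
      exact div_pos (mul_pos (mul_pos hg (mul_pos (hγ i) (hH i))) this) (hnpos i)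
    linarith

lemma exists_unique_plus (N : ℕ) (hN : 1 ≤ N) (g : ℝ) (hg : 0 < g) (γ H u : Fin N → ℝ)
    (hγ : ∀ i, 0 < γ i) (hH : ∀ i, 0 < H i) (up : ℝ) (hup : IsGreatest (Set.range u) up) :
    ∃! x : ℝ, x ∈ Set.Ioc up (up + Real.sqrt (g * ∑ i, γ i * H i)) ∧
      Ffun N g γ H u x = 1 := by
  have : NeZero N := ⟨by omega⟩
  have hub : ∀ i, u i ≤ up := fun i => hup.2 ⟨i, rfl⟩
  obtain ⟨ip, hip⟩ := hup.1
  have hsum : (0:ℝ) < ∑ i, γ i * H i :=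
    Finset.sum_pos (fun i _ => mul_pos (hγ i) (hH i)) Finset.univ_nonempty
  set r := Real.sqrt (g * ∑ i, γ i * H i) with hrdef
  have hr : 0 < r := Real.sqrt_pos.mpr (by positivity)
  have hr2 : r ^ 2 = g * ∑ i, γ i * H i := Real.sq_sqrt (by positivity)
  set δ := Real.sqrt (g * (γ ip * H ip)) with hδdef
  have hδpos' : (0:ℝ) < g * (γ ip * H ip) := mul_pos hg (mul_pos (hγ ip) (hH ip))
  have hδ : 0 < δ := Real.sqrt_pos.mpr hδpos'
  have hδ2 : δ ^ 2 = g * (γ ip * H ip) := Real.sq_sqrt hδpos'.le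
  have hδr : δ ≤ r := by
    apply Real.sqrt_le_sqrt
    have := Finset.single_le_sum (f := fun i => γ i * H i)
      (fun i _ => (mul_pos (hγ i) (hH i)).le) (Finset.mem_univ ip)
    exact mul_le_mul_of_nonneg_left this hg.le
  have hanti : StrictAntiOn (Ffun N g γ H u) (Set.Ioi up) := by
    intro x hx y hy hxy
    refine Finset.sum_lt_sum_of_nonempty Finset.univ_nonempty fun i _ => ?_
    have h1 : 0 < x - u i := by
      have := hub i; have := Set.mem_Ioi.mp hx; linarith
    exact div_lt_div_of_pos_left (mul_pos hg (mul_pos (hγ i) (hH i))) (pow_pos h1 2)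
      (by nlinarith [Set.mem_Ioi.mp hy])
  have hcont : ContinuousOn (Ffun N g γ H u) (Set.Ioi up) := by
    apply continuousOn_finset_sum
    intro i _
    refine ContinuousOn.div continuousOn_const
      (((continuous_id.sub continuous_const).pow 2).continuousOn) (fun x hx => ?_)
    have h1 : 0 < x - u i := by have := hub i; have := Set.mem_Ioi.mp hx; linarith
    positivity
  set a := up + δ with hadef
  set b := up + r with hbdef
  have hab : a ≤ b := by simp [hadef, hbdef]; linarith
  have hFb : Ffun N g γ H u b ≤ 1 := by
    calc Ffun N g γ H u b ≤ ∑ i, g * (γ i * H i) / (g * ∑ j, γ j * H j) := by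
          refine Finset.sum_le_sum fun i _ => ?_
          have h1 : r ≤ b - u i := by have := hub i; simp [hbdef]; linarith
          have h2 : g * ∑ j, γ j * H j ≤ (b - u i) ^ 2 := by
            rw [← hr2]; exact pow_le_pow_left₀ hr.le h1 2
          have h3 : (0:ℝ) < g * (γ i * H i) := mul_pos hg (mul_pos (hγ i) (hH i))
          have h4 : (0:ℝ) < g * ∑ j, γ j * H j := by positivity
          gcongr
      _ = 1 := by
          rw [← Finset.sum_div, ← Finset.mul_sum, div_self (by positivity)]
  have hFa : 1 ≤ Ffun N g γ H u a := by
    have h1 : g * (γ ip * H ip) / (a - u ip) ^ 2 = 1 := by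
      rw [hadef, hip]
      have : up + δ - up = δ := by ring
      rw [this, hδ2, div_self hδpos'.ne']
    calc (1:ℝ) = g * (γ ip * H ip) / (a - u ip) ^ 2 := h1.symm
      _ ≤ Ffun N g γ H u a := by
          refine Finset.single_le_sum (f := fun i => g * (γ i * H i) / (a - u i) ^ 2)
            (fun i _ => ?_) (Finset.mem_univ ip)
          exact div_nonneg (mul_pos hg (mul_pos (hγ i) (hH i))).le (sq_nonneg _)
  have hsub : Set.Icc a b ⊆ Set.Ioi up := fun x hx => by
    simp only [Set.mem_Ioi]; have := hx.1; simp [hadef] at this ⊢; linarith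
  obtain ⟨x, hxmem, hFx⟩ := intermediate_value_Icc' hab (hcont.mono hsub) ⟨hFb, hFa⟩
  refine ⟨x, ⟨⟨?_, ?_⟩, hFx⟩, ?_⟩
  · have := hxmem.1; simp only [hadef] at this; linarith
  · exact hxmem.2
  · rintro y ⟨hymem, hFy⟩
    exact hanti.injOn (Set.mem_Ioi.mpr hymem.1)
      (Set.mem_Ioi.mpr (by have := hxmem.1; simp only [hadef] at this; linarith))
      (by rw [hFy, hFx])

lemma exists_unique_minus (N : ℕ) (hN : 1 ≤ N) (g : ℝ) (hg : 0 < g) (γ H u : Fin N → ℝ)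
    (hγ : ∀ i, 0 < γ i) (hH : ∀ i, 0 < H i) (um : ℝ) (hum : IsLeast (Set.range u) um) :
    ∃! x : ℝ, x ∈ Set.Ico (um - Real.sqrt (g * ∑ i, γ i * H i)) um ∧
      Ffun N g γ H u x = 1 := by
  have : NeZero N := ⟨by omega⟩
  have hlb : ∀ i, um ≤ u i := fun i => hum.2 ⟨i, rfl⟩
  obtain ⟨im, him⟩ := hum.1
  have hsum : (0:ℝ) < ∑ i, γ i * H i :=
    Finset.sum_pos (fun i _ => mul_pos (hγ i) (hH i)) Finset.univ_nonempty
  set r := Real.sqrt (g * ∑ i, γ i * H i) with hrdef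
  have hr : 0 < r := Real.sqrt_pos.mpr (by positivity)
  have hr2 : r ^ 2 = g * ∑ i, γ i * H i := Real.sq_sqrt (by positivity)
  set δ := Real.sqrt (g * (γ im * H im)) with hδdef
  have hδpos' : (0:ℝ) < g * (γ im * H im) := mul_pos hg (mul_pos (hγ im) (hH im))
  have hδ : 0 < δ := Real.sqrt_pos.mpr hδpos'
  have hδ2 : δ ^ 2 = g * (γ im * H im) := Real.sq_sqrt hδpos'.le
  have hδr : δ ≤ r := by
    apply Real.sqrt_le_sqrt
    have := Finset.single_le_sum (f := fun i => γ i * H i)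
      (fun i _ => (mul_pos (hγ i) (hH i)).le) (Finset.mem_univ im)
    exact mul_le_mul_of_nonneg_left this hg.le
  have hmono : StrictMonoOn (Ffun N g γ H u) (Set.Iio um) := by
    intro x hx y hy hxy
    refine Finset.sum_lt_sum_of_nonempty Finset.univ_nonempty fun i _ => ?_
    have h1 : 0 < u i - y := by
      have := hlb i; have := Set.mem_Iio.mp hy; linarith
    have h2 : 0 < u i - x := by have := Set.mem_Iio.mp hx; linarith
    have hb : (0:ℝ) < (y - u i) ^ 2 := by nlinarith
    have hc : (y - u i) ^ 2 < (x - u i) ^ 2 := by nlinarith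
    exact div_lt_div_of_pos_left (mul_pos hg (mul_pos (hγ i) (hH i))) hb hc
  have hcont : ContinuousOn (Ffun N g γ H u) (Set.Iio um) := by
    apply continuousOn_finset_sum
    intro i _
    refine ContinuousOn.div continuousOn_const
      (((continuous_id.sub continuous_const).pow 2).continuousOn) (fun x hx => ?_)
    have h1 : 0 < u i - x := by have := hlb i; have := Set.mem_Iio.mp hx; linarith
    have : x - u i ≠ 0 := by linarith
    positivity
  set a := um - r with hadef
  set b := um - δ with hbdef
  have hab : a ≤ b := by simp [hadef, hbdef]; linarith
  have hFa : Ffun N g γ H u a ≤ 1 := by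
    calc Ffun N g γ H u a ≤ ∑ i, g * (γ i * H i) / (g * ∑ j, γ j * H j) := by
          refine Finset.sum_le_sum fun i _ => ?_
          have h1 : r ≤ u i - a := by have := hlb i; simp [hadef]; linarith
          have h2 : g * ∑ j, γ j * H j ≤ (a - u i) ^ 2 := by
            rw [← hr2]
            calc r ^ 2 ≤ (u i - a) ^ 2 := pow_le_pow_left₀ hr.le h1 2
              _ = (a - u i) ^ 2 := by ring
          have h3 : (0:ℝ) < g * (γ i * H i) := mul_pos hg (mul_pos (hγ i) (hH i))
          have h4 : (0:ℝ) < g * ∑ j, γ j * H j := by positivity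
          gcongr
      _ = 1 := by
          rw [← Finset.sum_div, ← Finset.mul_sum, div_self (by positivity)]
  have hFb : 1 ≤ Ffun N g γ H u b := by
    have h1 : g * (γ im * H im) / (b - u im) ^ 2 = 1 := by
      rw [hbdef, him]
      have : (um - δ - um) ^ 2 = δ ^ 2 := by ring
      rw [this, hδ2, div_self hδpos'.ne']
    calc (1:ℝ) = g * (γ im * H im) / (b - u im) ^ 2 := h1.symm
      _ ≤ Ffun N g γ H u b := by
          refine Finset.single_le_sum (f := fun i => g * (γ i * H i) / (b - u i) ^ 2)
            (fun i _ => ?_) (Finset.mem_univ im)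
          exact div_nonneg (mul_pos hg (mul_pos (hγ i) (hH i))).le (sq_nonneg _)
  have hsub : Set.Icc a b ⊆ Set.Iio um := fun x hx => by
    simp only [Set.mem_Iio]; have := hx.2; simp only [hbdef] at this; linarith
  obtain ⟨x, hxmem, hFx⟩ := intermediate_value_Icc hab (hcont.mono hsub) ⟨hFa, hFb⟩
  refine ⟨x, ⟨⟨hxmem.1, ?_⟩, hFx⟩, ?_⟩
  · have := hxmem.2; simp only [hbdef] at this; linarith
  · rintro y ⟨hymem, hFy⟩
    exact hmono.injOn (Set.mem_Iio.mpr hymem.2)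
      (Set.mem_Iio.mpr (by have := hxmem.2; simp only [hbdef] at this; linarith))
      (by rw [hFy, hFx])

/-- Every complex eigenvalue of `A_N` lies in
`J₋ ∪ J₊ ∪ ⋃ᵢ Dᵢ`, where `J₋ = [ũ₋ - √(g h_N), ũ₋)`, `J₊ = (ũ₊, ũ₊ + √(g h_N)]` and
`Dᵢ = {z : |z - ũᵢ| ≤ √(g h_N), ũ₋ ≤ Re z ≤ ũ₊}`; moreover there is exactly one
eigenvalue in `J₋` and exactly one in `J₊`. -/
theorem stmt16 (N : ℕ) (hN : 1 ≤ N) (g : ℝ) (hg : 0 < g)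
    (γ H u : Fin N → ℝ) (hγ : ∀ i, 0 < γ i) (hγsum : ∑ i, γ i = 1)
    (hH : ∀ i, 0 < H i)
    (hN' um up : ℝ)
    (hhN : hN' = ∑ i, γ i * H i)
    (hum : IsLeast (Set.range u) um) (hup : IsGreatest (Set.range u) up) :
    (spectrum ℂ ((multilayerMatrix N g γ H u).map (fun x : ℝ => (x : ℂ))) ⊆
      {z : ℂ | z.im = 0 ∧ z.re ∈ Set.Ico (um - Real.sqrt (g * hN')) um} ∪
      {z : ℂ | z.im = 0 ∧ z.re ∈ Set.Ioc up (up + Real.sqrt (g * hN'))} ∪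
      (⋃ i : Fin N, {z : ℂ | ‖z - ((u i : ℝ) : ℂ)‖ ≤ Real.sqrt (g * hN') ∧
        um ≤ z.re ∧ z.re ≤ up})) ∧
    (∃! c : ℂ, c ∈ spectrum ℂ ((multilayerMatrix N g γ H u).map (fun x : ℝ => (x : ℂ))) ∧
      c.im = 0 ∧ c.re ∈ Set.Ico (um - Real.sqrt (g * hN')) um) ∧
    (∃! c : ℂ, c ∈ spectrum ℂ ((multilayerMatrix N g γ H u).map (fun x : ℝ => (x : ℂ))) ∧
      c.im = 0 ∧ c.re ∈ Set.Ioc up (up + Real.sqrt (g * hN'))) := by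
  subst hhN
  have hub : ∀ i, u i ≤ up := fun i => hup.2 ⟨i, rfl⟩
  have hlb : ∀ i, um ≤ u i := fun i => hum.2 ⟨i, rfl⟩
  refine ⟨?_, ?_, ?_⟩
  · intro z hz
    by_cases hcase : ∃ i, z = ((u i : ℝ) : ℂ)
    · obtain ⟨i, rfl⟩ := hcase
      refine Set.mem_union_right _ (Set.mem_iUnion.mpr ⟨i, ?_, ?_, ?_⟩)
      · simp [Real.sqrt_nonneg]
      · simpa using hlb i
      · simpa using hub i
    · push_neg at hcase
      have hS := (spec_char N hN g hg γ H u z hcase).mp hz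
      obtain ⟨i0, hi0⟩ := min_dist N hN g hg γ H u hγ hH z hcase hS
      by_cases hin : um ≤ z.re ∧ z.re ≤ up
      · exact Set.mem_union_right _ (Set.mem_iUnion.mpr ⟨i0, hi0, hin.1, hin.2⟩)
      · have hre : z.re < um ∨ up < z.re := by
          rcases lt_or_ge z.re um with h | h
          · exact Or.inl h
          · right; by_contra h2; push_neg at h2; exact hin ⟨h, h2⟩
        have him0 : z.im = 0 := im_zero N hN g hg γ H u hγ hH um up hlb hub z hS hre
        have hrebd := Complex.abs_re_le_norm (z - ((u i0 : ℝ) : ℂ))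
        rw [Complex.sub_re, Complex.ofReal_re] at hrebd
        apply Set.mem_union_left
        rcases hre with h | h
        · apply Set.mem_union_left
          have h1 : u i0 - z.re ≤ |z.re - u i0| := by
            rw [abs_sub_comm]; exact le_abs_self _
          have h2 := hlb i0
          exact ⟨him0, by constructor <;> [linarith; exact h]⟩
        · apply Set.mem_union_right
          have h1 : z.re - u i0 ≤ |z.re - u i0| := le_abs_self _
          have h2 := hub i0
          exact ⟨him0, h, by linarith⟩
  · obtain ⟨x, ⟨hxmem, hFx⟩, huniq⟩ := exists_unique_minus N hN g hg γ H u hγ hH um hum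
    have hxne : ∀ i, (x : ℂ) ≠ ((u i : ℝ) : ℂ) := by
      intro i h
      have h3 : x = u i := by exact_mod_cast h
      have h4 := hlb i; have h5 := hxmem.2; rw [h3] at h5; linarith
    refine ⟨(x : ℂ), ⟨?_, by simp, by simpa using hxmem⟩, ?_⟩
    · refine (spec_char N hN g hg γ H u _ hxne).mpr ?_
      rw [Sfun_ofReal, hFx]; norm_num
    · rintro c ⟨hcspec, hcim, hcre⟩
      have hc : c = ((c.re : ℝ) : ℂ) := Complex.ext (by simp) (by simp [hcim])
      have hcne : ∀ i, c ≠ ((u i : ℝ) : ℂ) := by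
        intro i h
        have h3 : c.re = u i := by rw [h]; simp
        have h4 := hlb i; have h5 := hcre.2; rw [h3] at h5; linarith
      have hSc := (spec_char N hN g hg γ H u c hcne).mp hcspec
      rw [hc, Sfun_ofReal] at hSc
      have hFc : Ffun N g γ H u c.re = 1 := by exact_mod_cast hSc
      rw [hc, huniq c.re ⟨hcre, hFc⟩]
  · obtain ⟨x, ⟨hxmem, hFx⟩, huniq⟩ := exists_unique_plus N hN g hg γ H u hγ hH up hup
    have hxne : ∀ i, (x : ℂ) ≠ ((u i : ℝ) : ℂ) := by
      intro i h
      have h3 : x = u i := by exact_mod_cast h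
      have h4 := hub i; have h5 := hxmem.1; rw [h3] at h5; linarith
    refine ⟨(x : ℂ), ⟨?_, by simp, by simpa using hxmem⟩, ?_⟩
    · refine (spec_char N hN g hg γ H u _ hxne).mpr ?_
      rw [Sfun_ofReal, hFx]; norm_num
    · rintro c ⟨hcspec, hcim, hcre⟩
      have hc : c = ((c.re : ℝ) : ℂ) := Complex.ext (by simp) (by simp [hcim])
      have hcne : ∀ i, c ≠ ((u i : ℝ) : ℂ) := by
        intro i h
        have h3 : c.re = u i := by rw [h]; simp
        have h4 := hub i; have h5 := hcre.1; rw [h3] at h5; linarith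
      have hSc := (spec_char N hN g hg γ H u c hcne).mp hcspec
      rw [hc, Sfun_ofReal] at hSc
      have hFc : Ffun N g γ H u c.re = 1 := by exact_mod_cast hSc
      rw [hc, huniq c.re ⟨hcre, hFc⟩]
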